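/- Suppose 1 ≤ g, h ≤ N, N - g and N - h are even, and 2k - 1 ≤ min(N-g, N-h) + 1. Then the ratio #E(g-1, h-1, N-2k+1)/#E(g,h,N) equals gh/N² when k = 1, and equals (gh / (N·(N-1)···(N-2k+2))²) · Π_{j=0}^{k-2} (N-g-2j)(N-h-2j) when k > 1. -/

import Mathlib

open Equiv Equiv.Perm Finset

noncomputable def fixc {α : Type*} (σ : Equiv.Perm α) : ℕ := Nat.card {x // σ x = x}


lemma fixc_add_support {α : Type*} [Fintype α] [DecidableEq α] (σ : Equiv.Perm α) :
    fixc σ + σ.support.card = Fintype.card α := by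
  have : fixc σ = (Finset.univ.filter (fun x => σ x = x)).card := by
    rw [fixc, Nat.card_eq_fintype_card, Fintype.card_subtype]
  rw [this, Equiv.Perm.support]
  simpa using Finset.card_filter_add_card_filter_not (s := Finset.univ)
    (p := fun x => σ x = x)

lemma invol_iff' {α : Type*} [Fintype α] [DecidableEq α] {σ : Equiv.Perm α} {g m : ℕ}
    (hcard : Fintype.card α = g + 2 * m) :
    (σ * σ = 1 ∧ fixc σ = g) ↔ σ.cycleType = Multiset.replicate m 2 := by
  constructor
  · rintro ⟨h1, h2⟩
    have horder : orderOf σ ∣ 2 := orderOf_dvd_of_pow_eq_one (by rw [pow_two]; exact h1)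
    have hall : ∀ n ∈ σ.cycleType, n = 2 := fun n hn =>
      le_antisymm (Nat.le_of_dvd two_pos ((Equiv.Perm.dvd_of_mem_cycleType hn).trans horder))
        (Equiv.Perm.two_le_of_mem_cycleType hn)
    have hrep : σ.cycleType = Multiset.replicate (Multiset.card σ.cycleType) 2 :=
      Multiset.eq_replicate_card.mpr hall
    have hsum : σ.cycleType.sum = 2 * m := by
      have := fixc_add_support σ
      rw [Equiv.Perm.sum_cycleType]
      omega
    rw [hrep] at hsum ⊢
    rw [Multiset.sum_replicate, smul_eq_mul] at hsum
    congr 1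
    omega
  · intro hct
    have hsum : σ.support.card = 2 * m := by
      rw [← Equiv.Perm.sum_cycleType, hct, Multiset.sum_replicate, smul_eq_mul]; ring
    constructor
    · rw [← pow_two, ← orderOf_dvd_iff_pow_eq_one, ← Equiv.Perm.lcm_cycleType, hct]
      exact Multiset.lcm_dvd.mpr (fun x hx => by rw [Multiset.eq_of_mem_replicate hx])
    · have := fixc_add_support σ
      omega


variable (g m : ℕ)

abbrev TT := Fin g ⊕ Fin m × Bool

def sig0 : Equiv.Perm (TT g m) :=
  Equiv.sumCongr (Equiv.refl _) (Equiv.prodCongr (Equiv.refl _) (Equiv.swap false true))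

lemma sig0_inl (a : Fin g) : sig0 g m (Sum.inl a) = Sum.inl a := rfl

lemma sig0_inr (i : Fin m) (b : Bool) : sig0 g m (Sum.inr (i, b)) = Sum.inr (i, !b) := by
  cases b <;> simp [sig0, Equiv.swap_apply_of_ne_of_ne]

lemma sig0_invol : sig0 g m * sig0 g m = 1 := by
  ext x
  rcases x with a | ⟨i, b⟩
  · rfl
  · simp [Equiv.Perm.mul_apply, sig0_inr]

lemma sig0_fix_iff (x : TT g m) : sig0 g m x = x ↔ ∃ a, Sum.inl a = x := by
  rcases x with a | ⟨i, b⟩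
  · simp [sig0_inl]
  · rw [sig0_inr]
    constructor
    · intro hc
      injection hc with h
      cases b <;> simp_all
    · rintro ⟨a, ha⟩; cases ha

lemma fixc_sig0 : fixc (sig0 g m) = g := by
  rw [fixc, Nat.card_congr (Equiv.subtypeEquivRight (sig0_fix_iff g m))]
  have e : {x : TT g m // ∃ a, Sum.inl a = x} ≃ Fin g :=
    (Equiv.ofInjective Sum.inl Sum.inl_injective).symm
  rw [Nat.card_congr e]
  simp

variable {g m}

def phiE (ρ : Equiv.Perm (Fin g)) (τ : Equiv.Perm (Fin m)) (ε : Fin m → Bool) :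
    Equiv.Perm (TT g m) :=
  Equiv.sumCongr ρ
    (Equiv.prodShear τ (fun i => if ε i then Equiv.swap false true else Equiv.refl Bool))

lemma phiE_inl (ρ : Equiv.Perm (Fin g)) (τ : Equiv.Perm (Fin m)) (ε : Fin m → Bool) (a : Fin g) :
    phiE ρ τ ε (Sum.inl a) = Sum.inl (ρ a) := rfl

lemma phiE_inr (ρ : Equiv.Perm (Fin g)) (τ : Equiv.Perm (Fin m)) (ε : Fin m → Bool)
    (i : Fin m) (b : Bool) : phiE ρ τ ε (Sum.inr (i, b)) = Sum.inr (τ i, xor b (ε i)) := by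
  cases hb : ε i <;> cases b <;> simp [phiE, Equiv.prodShear, hb]

lemma phiE_comm (ρ : Equiv.Perm (Fin g)) (τ : Equiv.Perm (Fin m)) (ε : Fin m → Bool) :
    phiE ρ τ ε * sig0 g m = sig0 g m * phiE ρ τ ε := by
  ext x
  rcases x with a | ⟨i, b⟩
  · rfl
  · simp only [Equiv.Perm.mul_apply, sig0_inr, phiE_inr]
    cases b <;> cases ε i <;> rfl

variable (g m)

lemma stab_bij :
    Function.Bijective (fun p : Equiv.Perm (Fin g) × Equiv.Perm (Fin m) × (Fin m → Bool) =>
      (⟨ConjAct.toConjAct (phiE p.1 p.2.1 p.2.2), by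
        rw [MulAction.mem_stabilizer_iff, ConjAct.smul_def, ConjAct.ofConjAct_toConjAct,
          mul_inv_eq_iff_eq_mul, phiE_comm]⟩ :
        MulAction.stabilizer (ConjAct (Equiv.Perm (TT g m))) (sig0 g m))) := by
  constructor
  · rintro ⟨ρ, τ, ε⟩ ⟨ρ', τ', ε'⟩ hpq
    have h : phiE ρ τ ε = phiE ρ' τ' ε' := by
      have := congrArg (fun x => ConjAct.ofConjAct x.1) hpq
      simpa using this
    have hρ : ρ = ρ' := Equiv.ext fun a => by
      have := congrArg (fun f : Equiv.Perm (TT g m) => f (Sum.inl a)) h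
      simpa [phiE_inl] using this
    have h2 : ∀ i, (τ i, ε i) = (τ' i, ε' i) := by
      intro i
      have := congrArg (fun f : Equiv.Perm (TT g m) => f (Sum.inr (i, false))) h
      simpa [phiE_inr] using this
    have hτ : τ = τ' := Equiv.ext fun i => congrArg Prod.fst (h2 i)
    have hε : ε = ε' := funext fun i => congrArg Prod.snd (h2 i)
    simp [hρ, hτ, hε]
  · rintro ⟨π', hπ'⟩
    set π := ConjAct.ofConjAct π' with hπdef
    rw [MulAction.mem_stabilizer_iff, ConjAct.smul_def, mul_inv_eq_iff_eq_mul] at hπ'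
    have hcomm : ∀ x, π (sig0 g m x) = sig0 g m (π x) := by
      intro x
      exact congrFun (congrArg (fun f : Equiv.Perm (TT g m) => (f : TT g m → TT g m)) hπ') x
    have hcomm' : ∀ x, π⁻¹ (sig0 g m x) = sig0 g m (π⁻¹ x) := by
      intro x
      apply π.injective
      rw [hcomm, Equiv.Perm.inv_def, Equiv.apply_symm_apply, Equiv.apply_symm_apply]
    have hinl : ∀ a, ∃ a', π (Sum.inl a) = Sum.inl a' := by
      intro a
      have hfix : sig0 g m (π (Sum.inl a)) = π (Sum.inl a) := by
        rw [← hcomm, sig0_inl]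
      rcases hx : π (Sum.inl a) with a' | ⟨i, b⟩
      · exact ⟨a', rfl⟩
      · rw [hx, sig0_inr] at hfix
        injection hfix with hh
        cases b <;> simp_all
    have hinl' : ∀ a, ∃ a', π⁻¹ (Sum.inl a) = Sum.inl a' := by
      intro a
      have hfix : sig0 g m (π⁻¹ (Sum.inl a)) = π⁻¹ (Sum.inl a) := by
        rw [← hcomm', sig0_inl]
      rcases hx : π⁻¹ (Sum.inl a) with a' | ⟨i, b⟩
      · exact ⟨a', rfl⟩
      · rw [hx, sig0_inr] at hfix
        injection hfix with hh
        cases b <;> simp_all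
    choose ρ0 hρ0 using hinl
    choose ρ1 hρ1 using hinl'
    have hρleft : ∀ a, ρ1 (ρ0 a) = a := by
      intro a
      apply Sum.inl_injective (α := Fin g) (β := Fin m × Bool)
      rw [← hρ1, ← hρ0, Equiv.Perm.inv_def, Equiv.symm_apply_apply]
    have hρright : ∀ a, ρ0 (ρ1 a) = a := by
      intro a
      apply Sum.inl_injective (α := Fin g) (β := Fin m × Bool)
      rw [← hρ0, ← hρ1, Equiv.Perm.inv_def, Equiv.apply_symm_apply]
    set ρ : Equiv.Perm (Fin g) := ⟨ρ0, ρ1, hρleft, hρright⟩ with hρdef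
    have hinr : ∀ i : Fin m, ∃ jc : Fin m × Bool, π (Sum.inr (i, false)) = Sum.inr jc := by
      intro i
      rcases hx : π (Sum.inr (i, false)) with a | jc
      · exfalso
        have : π⁻¹ (Sum.inl a) = Sum.inr (i, false) := by
          rw [← hx, Equiv.Perm.inv_def, Equiv.symm_apply_apply]
        rw [hρ1] at this
        exact Sum.inl_ne_inr this
      · exact ⟨jc, rfl⟩
    choose f hf using hinr
    have hπtrue : ∀ i : Fin m, π (Sum.inr (i, true)) = Sum.inr ((f i).1, !(f i).2) := by
      intro i
      have : (Sum.inr (i, true) : TT g m) = sig0 g m (Sum.inr (i, false)) := by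
        simp [sig0_inr]
      rw [this, hcomm, hf, sig0_inr]
    have hτinj : Function.Injective (fun i => (f i).1) := by
      intro i i' hii
      simp only at hii
      by_cases hb : (f i).2 = (f i').2
      · have : π (Sum.inr (i, false)) = π (Sum.inr (i', false)) := by
          rw [hf, hf, Prod.ext hii hb]
        have := π.injective this
        injection this with hh
        exact (Prod.mk.injEq _ _ _ _ ▸ hh).1
      · exfalso
        have hb' : (f i').2 = !(f i).2 := by
          cases h1 : (f i).2 <;> cases h2 : (f i').2 <;> simp_all
        have : π (Sum.inr (i, true)) = π (Sum.inr (i', false)) := by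
          rw [hπtrue, hf i']
          exact congrArg Sum.inr (Prod.ext hii hb'.symm)
        have := π.injective this
        simp at this
    set τ : Equiv.Perm (Fin m) :=
      Equiv.ofBijective _ (Finite.injective_iff_bijective.mp hτinj) with hτdef
    refine ⟨(ρ, τ, fun i => (f i).2), ?_⟩
    have hphi : phiE ρ τ (fun i => (f i).2) = π := by
      ext x
      rcases x with a | ⟨i, b⟩
      · rw [phiE_inl, hρ0 a]
        rfl
      · rw [phiE_inr]
        have hτi : τ i = (f i).1 := rfl
        cases b
        · rw [hf, hτi]
          simp
        · rw [hπtrue, hτi]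
          simp
    apply Subtype.ext
    simp only [hphi]
    exact ConjAct.toConjAct_ofConjAct π'

lemma card_invol_TT (g m : ℕ) :
    Nat.card {σ : Equiv.Perm (TT g m) | σ * σ = 1 ∧ fixc σ = g} *
      (g.factorial * (m.factorial * 2 ^ m)) = (g + 2 * m).factorial := by
  classical
  have hcardT : Fintype.card (TT g m) = g + 2 * m := by
    simp [Fintype.card_sum, Fintype.card_prod]
    ring
  have hct0 : (sig0 g m).cycleType = Multiset.replicate m 2 :=
    (invol_iff' hcardT).mp ⟨sig0_invol g m, fixc_sig0 g m⟩
  have hset : {σ : Equiv.Perm (TT g m) | σ * σ = 1 ∧ fixc σ = g}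
      = MulAction.orbit (ConjAct (Equiv.Perm (TT g m))) (sig0 g m) := by
    ext σ
    rw [Set.mem_setOf_eq, ConjAct.mem_orbit_conjAct, Equiv.Perm.isConj_iff_cycleType_eq,
      invol_iff' hcardT, hct0]
  haveI : Fintype (MulAction.orbit (ConjAct (Equiv.Perm (TT g m))) (sig0 g m)) :=
    Fintype.ofFinite _
  haveI : Fintype (MulAction.stabilizer (ConjAct (Equiv.Perm (TT g m))) (sig0 g m)) :=
    Fintype.ofFinite _
  have key := MulAction.card_orbit_mul_card_stabilizer_eq_card_group
    (ConjAct (Equiv.Perm (TT g m))) (sig0 g m)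
  have hstab : Nat.card (MulAction.stabilizer (ConjAct (Equiv.Perm (TT g m))) (sig0 g m))
      = g.factorial * (m.factorial * 2 ^ m) := by
    rw [← Nat.card_eq_of_bijective _ (stab_bij g m)]
    simp [Nat.card_prod, Nat.card_fun, Nat.card_eq_fintype_card, Fintype.card_perm]
  rw [hset, ← hstab, Nat.card_eq_fintype_card, Nat.card_eq_fintype_card, key, ConjAct.card,
    Fintype.card_perm, hcardT]

lemma card_invol_fin (N gg m : ℕ) (hN : N = gg + 2 * m) :
    Nat.card {σ : Equiv.Perm (Fin N) | σ * σ = 1 ∧ fixc σ = gg} *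
      (gg.factorial * (m.factorial * 2 ^ m)) = N.factorial := by
  classical
  have e : Fin N ≃ TT gg m := Fintype.equivOfCardEq (by simp [hN]; ring)
  have hcongr : ∀ σ : Equiv.Perm (Fin N),
      (σ * σ = 1 ∧ fixc σ = gg) ↔ (e.permCongr σ * e.permCongr σ = 1 ∧ fixc (e.permCongr σ) = gg) := by
    intro σ
    have hmul : e.permCongr σ * e.permCongr σ = e.permCongr (σ * σ) := by
      ext x
      simp [Equiv.permCongr_apply, Equiv.Perm.mul_apply]
    have hone : e.permCongr (σ * σ) = 1 ↔ σ * σ = 1 := by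
      constructor
      · intro h1
        apply Equiv.ext
        intro y
        have := congrArg (fun f : Equiv.Perm (TT gg m) => e.symm (f (e y))) h1
        simpa [Equiv.permCongr_apply] using this
      · intro h1
        rw [h1]
        apply Equiv.ext
        intro x
        simp [Equiv.permCongr_apply]
    have hfix : fixc (e.permCongr σ) = fixc σ := by
      apply Nat.card_congr
      exact (Equiv.subtypeEquiv e (fun y => by simp [Equiv.permCongr_apply])).symm
    rw [hmul, hone, hfix]
  have := card_invol_TT gg m
  rw [← hN] at this
  rw [← this]
  congr 1
  apply Nat.card_congr
  exact (e.permCongr.subtypeEquiv hcongr)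

lemma card_invol (N gg : ℕ) (hle : gg ≤ N) (hev : Even (N - gg)) :
    Nat.card {σ : Equiv.Perm (Fin N) | σ * σ = 1 ∧ fixc σ = gg} *
      (gg.factorial * (((N - gg) / 2).factorial * 2 ^ ((N - gg) / 2))) = N.factorial := by
  obtain ⟨r, hr⟩ := hev
  have h1 : (N - gg) / 2 = r := by omega
  rw [h1]
  exact card_invol_fin N gg r (by omega)


/-- The number of fixed points of a permutation of `Fin N`. -/
noncomputable def fixCard {N : ℕ} (σ : Equiv.Perm (Fin N)) : ℕ :=
  Nat.card {x : Fin N // σ x = x}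

/-- The set of ordered pairs `(G, H)` of involutions of an `N`-element set with exactly
`g` and `h` fixed points respectively. -/
def pairE (g h N : ℕ) : Set (Equiv.Perm (Fin N) × Equiv.Perm (Fin N)) :=
  {p | p.1 * p.1 = 1 ∧ p.2 * p.2 = 1 ∧ fixCard p.1 = g ∧ fixCard p.2 = h}


lemma fixCard_eq {N : ℕ} (σ : Equiv.Perm (Fin N)) : fixCard σ = fixc σ := rfl

lemma card_pairE (g h N : ℕ) (hg : g ≤ N) (hh : h ≤ N)
    (heg : Even (N - g)) (heh : Even (N - h)) :
    Nat.card (pairE g h N) *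
      ((g.factorial * (((N - g) / 2).factorial * 2 ^ ((N - g) / 2))) *
       (h.factorial * (((N - h) / 2).factorial * 2 ^ ((N - h) / 2)))) =
      N.factorial * N.factorial := by
  have hprod : pairE g h N = {σ : Equiv.Perm (Fin N) | σ * σ = 1 ∧ fixc σ = g} ×ˢ
      {σ : Equiv.Perm (Fin N) | σ * σ = 1 ∧ fixc σ = h} := by
    ext p
    simp only [pairE, Set.mem_setOf_eq, Set.mem_prod, fixCard_eq]
    tauto
  rw [hprod, Nat.card_congr (Equiv.Set.prod _ _), Nat.card_prod, mul_mul_mul_comm,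
    card_invol N g hg heg, card_invol N h hh heh]

lemma prod_cast_aux (N kk x r : ℕ) (hkr : kk ≤ r) (hxN : x ≤ N) (hrx : N - x = r + r) :
    (2 : ℝ) ^ kk * ((r.descFactorial kk : ℕ) : ℝ)
      = ∏ j ∈ Finset.range kk, ((N : ℝ) - x - 2 * j) := by
  have hc : (N : ℝ) - x = (r : ℝ) + r := by
    rw [← Nat.cast_sub hxN, hrx]
    push_cast
    ring
  rw [Nat.descFactorial_eq_prod_range]
  push_cast
  rw [show (2 : ℝ) ^ kk = ∏ _i ∈ Finset.range kk, (2 : ℝ) by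
      rw [Finset.prod_const, Finset.card_range], ← Finset.prod_mul_distrib]
  apply Finset.prod_congr rfl
  intro j hj
  rw [Finset.mem_range] at hj
  rw [Nat.cast_sub (by omega)]
  linarith [hc]


/-- The ratio `#E(g-1,h-1,N-2k+1)/#E(g,h,N)` equals `gh/N²` for `k = 1`, and
`(gh/(N^{2k-1 falling})²)·Π_{j=0}^{k-2}(N-g-2j)(N-h-2j)` for `k > 1`. -/
theorem pairE_ratio (g h N k : ℕ)
    (hg1 : 1 ≤ g) (hgN : g ≤ N) (hh1 : 1 ≤ h) (hhN : h ≤ N)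
    (heg : Even (N - g)) (heh : Even (N - h)) (hk : 1 ≤ k)
    (hkN : 2 * k - 1 ≤ min (N - g) (N - h) + 1) :
    (Nat.card (pairE (g - 1) (h - 1) (N - (2 * k - 1))) : ℝ) /
        (Nat.card (pairE g h N) : ℝ) =
      if k = 1 then (g : ℝ) * h / (N : ℝ) ^ 2
      else
        (g : ℝ) * h / ((N.descFactorial (2 * k - 1) : ℝ)) ^ 2 *
          ∏ j ∈ Finset.range (k - 1),
            ((N : ℝ) - g - 2 * j) * ((N : ℝ) - h - 2 * j) := by
  obtain ⟨r1, hr1⟩ := heg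
  obtain ⟨r2, hr2⟩ := heh
  set kk := k - 1 with hkk
  set N' := N - (2 * k - 1) with hN'
  have hkkr1 : kk ≤ r1 := by omega
  have hkkr2 : kk ≤ r2 := by omega
  have hkNle : 2 * k - 1 ≤ N := by omega
  -- counting for the denominator
  have hA := card_pairE g h N hgN hhN ⟨r1, hr1⟩ ⟨r2, hr2⟩
  rw [show (N - g) / 2 = r1 by omega, show (N - h) / 2 = r2 by omega] at hA
  -- counting for the numerator
  have hB := card_pairE (g - 1) (h - 1) N' (by omega) (by omega)
    (⟨r1 - kk, by omega⟩) (⟨r2 - kk, by omega⟩)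
  rw [show (N' - (g - 1)) / 2 = r1 - kk by omega,
    show (N' - (h - 1)) / 2 = r2 - kk by omega] at hB
  -- factorial decompositions
  have hNf : N.factorial = N.descFactorial (2 * k - 1) * N'.factorial := by
    rw [← Nat.factorial_mul_descFactorial hkNle, mul_comm]
  have hgf : g.factorial = g * (g - 1).factorial := by
    conv_lhs => rw [show g = (g - 1) + 1 by omega]
    rw [Nat.factorial_succ]
    congr 2
    omega
  have hhf : h.factorial = h * (h - 1).factorial := by
    conv_lhs => rw [show h = (h - 1) + 1 by omega]
    rw [Nat.factorial_succ]
    congr 2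
    omega
  have hr1f : r1.factorial = r1.descFactorial kk * (r1 - kk).factorial := by
    rw [← Nat.factorial_mul_descFactorial hkkr1, mul_comm]
  have hr2f : r2.factorial = r2.descFactorial kk * (r2 - kk).factorial := by
    rw [← Nat.factorial_mul_descFactorial hkkr2, mul_comm]
  have hp1 : (2 : ℕ) ^ r1 = 2 ^ kk * 2 ^ (r1 - kk) := by
    rw [← pow_add]
    congr 1
    omega
  have hp2 : (2 : ℕ) ^ r2 = 2 ^ kk * 2 ^ (r2 - kk) := by
    rw [← pow_add]
    congr 1
    omega
  rw [hNf, hgf, hhf, hr1f, hr2f, hp1, hp2] at hA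
  -- nonvanishing
  have hdFpos : 0 < N.descFactorial (2 * k - 1) :=
    Nat.pos_of_ne_zero (by rw [Ne, Nat.descFactorial_eq_zero_iff_lt]; omega)
  have hcard0 : Nat.card (pairE g h N) ≠ 0 := by
    intro h0
    rw [h0, zero_mul] at hA
    exact (Nat.mul_pos (Nat.mul_pos hdFpos (Nat.factorial_pos N'))
      (Nat.mul_pos hdFpos (Nat.factorial_pos N'))).ne' hA.symm
  have hA0 : (Nat.card (pairE g h N) : ℝ) ≠ 0 := by exact_mod_cast hcard0
  have hdF0 : (N.descFactorial (2 * k - 1) : ℝ) ≠ 0 := by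
    exact_mod_cast hdFpos.ne'
  -- the main formula
  have hmain : (Nat.card (pairE (g - 1) (h - 1) N') : ℝ) / (Nat.card (pairE g h N) : ℝ)
      = (g : ℝ) * h / ((N.descFactorial (2 * k - 1) : ℝ)) ^ 2 *
        ∏ j ∈ Finset.range kk, (((N : ℝ) - g - 2 * j) * ((N : ℝ) - h - 2 * j)) := by
    have hP : (∏ j ∈ Finset.range kk, (((N : ℝ) - g - 2 * j) * ((N : ℝ) - h - 2 * j)))
        = ((2 : ℝ) ^ kk * ((r1.descFactorial kk : ℕ) : ℝ)) *
          ((2 : ℝ) ^ kk * ((r2.descFactorial kk : ℕ) : ℝ)) := by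
      rw [Finset.prod_mul_distrib, prod_cast_aux N kk g r1 hkkr1 hgN hr1,
        prod_cast_aux N kk h r2 hkkr2 hhN hr2]
    rw [hP, div_mul_eq_mul_div, div_eq_div_iff hA0 (pow_ne_zero 2 hdF0)]
    have hAR : (Nat.card (pairE g h N) : ℝ) *
        (((g : ℝ) * (((g - 1).factorial : ℕ) : ℝ) *
          ((((r1.descFactorial kk : ℕ) : ℝ) * (((r1 - kk).factorial : ℕ) : ℝ)) *
           ((2 : ℝ) ^ kk * (2 : ℝ) ^ (r1 - kk)))) *
         ((h : ℝ) * (((h - 1).factorial : ℕ) : ℝ) *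
          ((((r2.descFactorial kk : ℕ) : ℝ) * (((r2 - kk).factorial : ℕ) : ℝ)) *
           ((2 : ℝ) ^ kk * (2 : ℝ) ^ (r2 - kk)))))
        = (((N.descFactorial (2 * k - 1) : ℕ) : ℝ) * ((N'.factorial : ℕ) : ℝ)) *
          (((N.descFactorial (2 * k - 1) : ℕ) : ℝ) * ((N'.factorial : ℕ) : ℝ)) := by
      exact_mod_cast hA
    have hBR : (Nat.card (pairE (g - 1) (h - 1) N') : ℝ) *
        (((((g - 1).factorial : ℕ) : ℝ) *
          ((((r1 - kk).factorial : ℕ) : ℝ) * (2 : ℝ) ^ (r1 - kk))) *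
         ((((h - 1).factorial : ℕ) : ℝ) *
          ((((r2 - kk).factorial : ℕ) : ℝ) * (2 : ℝ) ^ (r2 - kk))))
        = ((N'.factorial : ℕ) : ℝ) * ((N'.factorial : ℕ) : ℝ) := by
      exact_mod_cast hB
    have hDa0 : (((((g - 1).factorial : ℕ) : ℝ) *
          ((((r1 - kk).factorial : ℕ) : ℝ) * (2 : ℝ) ^ (r1 - kk))) *
         ((((h - 1).factorial : ℕ) : ℝ) *
          ((((r2 - kk).factorial : ℕ) : ℝ) * (2 : ℝ) ^ (r2 - kk)))) ≠ 0 := by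
      positivity
    apply mul_right_cancel₀ hDa0
    linear_combination ((N.descFactorial (2 * k - 1) : ℝ)) ^ 2 * hBR - hAR
  rw [hmain]
  split_ifs with hk1
  · subst hk1
    have : kk = 0 := by omega
    rw [this]
    norm_num [Nat.descFactorial_one]
  · rfl
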